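/- Let ω > 0, τ ∈ (0,1), ζ ∈ (0,1), and suppose each map x ↦ B_i(x) is continuous with symmetric positive definite values. Let {x^k} ⊂ ℝ^n be a sequence with d^k := d_ω(x^k) ≠ 0 for all k, such that x^{k+1} = x^k + λ_k d^k where λ_k is the largest number of the form ζ^j (j a nonnegative integer) satisfying the Armijo condition F_i(x^k + λ_k d^k) ≤ F_i(x^k) + λ_k τ θ_{x^k}(d^k) for all i = 1,…,m. If {F_i(x^k)}_k is bounded from below for every i, then every accumulation point of {x^k} is a Pareto stationary point. -/

import Mathlib

open Filter Topology
open scoped RealInnerProductSpace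

noncomputable section

/-- `Euc n` is Euclidean `n`-space `ℝ^n`. -/
abbrev Euc (n : ℕ) := EuclideanSpace ℝ (Fin n)

/-- `HasDirDeriv f x d D` : the one-sided directional derivative of `f` at `x`
in direction `d` exists and equals `D`, i.e. `(f (x + α • d) - f x)/α → D` as `α → 0⁺`. -/
def HasDirDeriv {n : ℕ} (f : Euc n → ℝ) (x d : Euc n) (D : ℝ) : Prop :=
  Filter.Tendsto (fun α : ℝ => (f (x + α • d) - f x) / α)
    (nhdsWithin 0 (Set.Ioi 0)) (nhds D)

/-- `x` is Pareto stationary for the objectives `F i`: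
for every direction `d`, `max_i F_i'(x; d) ≥ 0`, i.e. some objective has
nonnegative directional derivative in direction `d`. -/
def ParetoStationary {n m : ℕ} (F : Fin m → Euc n → ℝ) (x : Euc n) : Prop :=
  ∀ d : Euc n, ∃ i : Fin m, ∃ D : ℝ, HasDirDeriv (F i) x d D ∧ 0 ≤ D

/-- `θ_x(d) = max_i { ⟪∇g_i(x), d⟫ + ½⟪d, B_i(x) d⟫ + h_i(x+d) - h_i(x) }`. -/
def theta {n m : ℕ} (g h : Fin m → Euc n → ℝ)
    (B : Fin m → Euc n → (Euc n →L[ℝ] Euc n)) (x d : Euc n) : ℝ :=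
  ⨆ i : Fin m, (⟪gradient (g i) x, d⟫ + (1 / 2) * ⟪d, B i x d⟫ + h i (x + d) - h i x)

/-- `φ_{ω,x}(d) = θ_x(d) + (ω/2)‖d‖²`. -/
def phi {n m : ℕ} (g h : Fin m → Euc n → ℝ)
    (B : Fin m → Euc n → (Euc n →L[ℝ] Euc n)) (ω : ℝ) (x d : Euc n) : ℝ :=
  theta g h B x d + (ω / 2) * ‖d‖ ^ 2

/-- A finite `sup'` of continuous real functions is continuous. -/
theorem aux_cont_sup' {α ι : Type*} [TopologicalSpace α] (s : Finset ι) (hs : s.Nonempty)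
    (f : ι → α → ℝ) (hf : ∀ i, Continuous (f i)) :
    Continuous (fun x => s.sup' hs (fun i => f i x)) := by
  induction hs using Finset.Nonempty.cons_induction with
  | singleton i => simpa using hf i
  | cons i s hi hs ih =>
    simp only [Finset.sup'_cons hs]
    exact (hf i).sup ih

/-- Quadratic upper Taylor bound on a compact convex set, from C² smoothness. -/
theorem aux_taylor_bound {n : ℕ} (f : Euc n → ℝ) (hf : ContDiff ℝ 2 f) (K : Set (Euc n))
    (hKc : IsCompact K) (hKconv : Convex ℝ K) :
    ∃ L : ℝ, 0 ≤ L ∧ ∀ u ∈ K, ∀ v ∈ K,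
      f v ≤ f u + ⟪gradient f u, v - u⟫ + L * ‖v - u‖ ^ 2 := by
  have hdiff : Differentiable ℝ f := hf.differentiable (by norm_num)
  have hf' : ContDiff ℝ 1 (fderiv ℝ f) := hf.fderiv_right (m := 1) (by norm_num)
  have hf'' : Continuous (fderiv ℝ (fderiv ℝ f)) := hf'.continuous_fderiv (by norm_num)
  obtain ⟨C, hC⟩ := hKc.exists_bound_of_continuousOn (E := Euc n →L[ℝ] Euc n →L[ℝ] ℝ) ((hf''.continuousOn (s := K)))
  have hC0 : 0 ≤ max C 0 := le_max_right _ _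
  refine ⟨max C 0, hC0, fun u hu v hv => ?_⟩
  have hlip : ∀ z1 ∈ K, ∀ z2 ∈ K, ‖fderiv ℝ f z2 - fderiv ℝ f z1‖ ≤ max C 0 * ‖z2 - z1‖ := by
    intro z1 h1 z2 h2
    exact hKconv.norm_image_sub_le_of_norm_fderiv_le
      (fun z _ => (hf'.differentiable (by norm_num)).differentiableAt)
      (fun z hz => le_trans (hC z hz) (le_max_left _ _)) h1 h2
  set φ : Euc n → ℝ := fun z => f z - fderiv ℝ f u z with hφ
  have hφdiff : ∀ z, DifferentiableAt ℝ φ z := fun z =>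
    (hdiff z).sub ((fderiv ℝ f u).differentiableAt)
  have hφderiv : ∀ z, fderiv ℝ φ z = fderiv ℝ f z - fderiv ℝ f u := by
    intro z
    rw [hφ, fderiv_fun_sub (hdiff z) ((fderiv ℝ f u).differentiableAt)]
    simp [ContinuousLinearMap.fderiv]
  have hseg : segment ℝ u v ⊆ K := hKconv.segment_subset hu hv
  have hsegnorm : ∀ z ∈ segment ℝ u v, ‖z - u‖ ≤ ‖v - u‖ := by
    rintro z ⟨s, t, hs, ht, hst, rfl⟩
    have : s • u + t • v - u = t • (v - u) := by
      have hs' : s = 1 - t := by linarith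
      rw [hs']; module
    rw [this, norm_smul]
    simpa using mul_le_of_le_one_left (norm_nonneg _)
      (by simpa [abs_of_nonneg ht] using by linarith : |t| ≤ 1)
  have key : ‖φ v - φ u‖ ≤ (max C 0 * ‖v - u‖) * ‖v - u‖ := by
    apply Convex.norm_image_sub_le_of_norm_fderiv_le
      (fun z _ => hφdiff z)
      (fun z hz => ?_) (convex_segment u v) (left_mem_segment ℝ u v) (right_mem_segment ℝ u v)
    rw [hφderiv z]
    calc ‖fderiv ℝ f z - fderiv ℝ f u‖ ≤ max C 0 * ‖z - u‖ := hlip u hu z (hseg hz)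
      _ ≤ max C 0 * ‖v - u‖ := mul_le_mul_of_nonneg_left (hsegnorm z hz) hC0
  have hinner : ⟪gradient f u, v - u⟫ = fderiv ℝ f u (v - u) := by
    simp [gradient, InnerProductSpace.toDual_symm_apply]
  have hφvu : φ v - φ u = f v - f u - fderiv ℝ f u (v - u) := by
    simp only [hφ, map_sub]; ring
  have h2 := (abs_le.mp (by rwa [Real.norm_eq_abs, hφvu] at key)).2
  rw [hinner]
  nlinarith [h2]

/-- A convex function on `ℝ^n` has one-sided directional derivatives, which are
the infimum of the difference quotients. -/
theorem aux_convex_dirderiv {n : ℕ} (h : Euc n → ℝ) (hh : ConvexOn ℝ Set.univ h) (a d : Euc n) :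
    ∃ q : ℝ, Tendsto (fun t : ℝ => (h (a + t • d) - h a) / t) (nhdsWithin 0 (Set.Ioi 0)) (nhds q)
      ∧ ∀ t : ℝ, 0 < t → q ≤ (h (a + t • d) - h a) / t := by
  set H : ℝ → ℝ := fun t => h (a + t • d) with hH
  have hHconv : ConvexOn ℝ Set.univ H := by
    have h0 := hh.comp_affineMap (AffineMap.lineMap a (a + d))
    have he : ∀ t : ℝ, (AffineMap.lineMap a (a + d)) t = a + t • d := by
      intro t; simp [AffineMap.lineMap_apply]; module
    have h1 : ConvexOn ℝ ((AffineMap.lineMap a (a + d)) ⁻¹' Set.univ)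
        (h ∘ (AffineMap.lineMap a (a + d))) := h0
    simp only [Set.preimage_univ] at h1
    have hfun : H = h ∘ (AffineMap.lineMap a (a + d)) := by
      funext t
      simp [hH, Function.comp, he t]
    rw [hfun]; exact h1
  have hH0 : H 0 = h a := by simp [hH]
  set s : ℝ → ℝ := fun t => (H t - H 0) / t with hs
  have hmono : MonotoneOn s (Set.Ioi (0:ℝ)) := by
    intro t1 h1 t2 h2 h12
    have := hHconv.secant_mono (a := 0) (x := t1) (y := t2) (Set.mem_univ _)
      (Set.mem_univ _) (Set.mem_univ _) (ne_of_gt h1) (ne_of_gt h2) h12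
    simpa [hs] using this
  have hbdd : BddBelow (s '' Set.Ioi (0:ℝ)) := by
    refine ⟨(H (-1) - H 0) / (-1 - 0), ?_⟩
    rintro y ⟨t, ht, rfl⟩
    have := hHconv.secant_mono (a := 0) (x := (-1:ℝ)) (y := t) (Set.mem_univ _)
      (Set.mem_univ _) (Set.mem_univ _) (by norm_num) (ne_of_gt ht)
      (by linarith [Set.mem_Ioi.mp ht])
    simpa [hs] using this
  refine ⟨sInf (s '' Set.Ioi (0:ℝ)), ?_, ?_⟩
  · have := hmono.tendsto_nhdsGT hbdd
    convert this using 2 with t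
    simp [hs, hH0, hH]
  · intro t ht
    have hmem : s t ∈ s '' Set.Ioi (0:ℝ) := ⟨t, ht, rfl⟩
    have h2 := csInf_le hbdd hmem
    simpa [hs, hH0] using h2

set_option maxHeartbeats 2000000 in
/-- every accumulation point of the sequence generated by the
proximal quasi-Newton method with Armijo line searches is Pareto stationary. -/
theorem algorithm_one_accumulation_stationary
    {n m : ℕ} (g h : Fin m → Euc n → ℝ)
    (B : Fin m → Euc n → (Euc n →L[ℝ] Euc n))
    (hm : 0 < m)
    (hg : ∀ i, ContDiff ℝ 2 (g i))
    (hsc : ∀ i, ∃ a : ℝ, 0 < a ∧ ∀ x y : Euc n,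
      a * ‖x - y‖ ^ 2 ≤ ⟪gradient (g i) x - gradient (g i) y, x - y⟫)
    (hh : ∀ i, ConvexOn ℝ Set.univ (h i))
    (hBsymm : ∀ i x (u v : Euc n), ⟪B i x u, v⟫ = ⟪u, B i x v⟫)
    (hBpos : ∀ i x (d : Euc n), d ≠ 0 → 0 < ⟪d, B i x d⟫)
    (hBcont : ∀ i, Continuous (fun x => B i x))
    (ω τ ζ : ℝ) (hω : 0 < ω)
    (hτ : τ ∈ Set.Ioo (0 : ℝ) 1) (hζ : ζ ∈ Set.Ioo (0 : ℝ) 1)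
    (dω : Euc n → Euc n)
    (hmin : ∀ y d, phi g h B ω y (dω y) ≤ phi g h B ω y d)
    (huniq : ∀ y d, (∀ d', phi g h B ω y d ≤ phi g h B ω y d') → d = dω y)
    (x : ℕ → Euc n) (lam : ℕ → ℝ)
    (hd : ∀ k, dω (x k) ≠ 0)
    (hstep : ∀ k, x (k + 1) = x k + lam k • dω (x k))
    (hlam_form : ∀ k, ∃ j : ℕ, lam k = ζ ^ j)
    (harm : ∀ k i,
      g i (x k + lam k • dω (x k)) + h i (x k + lam k • dω (x k))
        ≤ g i (x k) + h i (x k) + lam k * τ * theta g h B (x k) (dω (x k)))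
    (hlam_max : ∀ k (j : ℕ), lam k < ζ ^ j →
      ∃ i, g i (x k) + h i (x k) + ζ ^ j * τ * theta g h B (x k) (dω (x k))
        < g i (x k + ζ ^ j • dω (x k)) + h i (x k + ζ ^ j • dω (x k)))
    (hbdd : ∀ i, ∃ C : ℝ, ∀ k, C ≤ g i (x k) + h i (x k)) :
    ∀ a : Euc n, MapClusterPt a atTop x →
      ParetoStationary (fun i y => g i y + h i y) a := by
  -- basic setup
  have hFinNe : Nonempty (Fin m) := Fin.pos_iff_nonempty.mp hm
  have hne : (Finset.univ : Finset (Fin m)).Nonempty := Finset.univ_nonempty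
  set i0 : Fin m := ⟨0, hm⟩ with hi0
  obtain ⟨hζ0, hζ1⟩ := hζ
  obtain ⟨hτ0, hτ1⟩ := hτ
  have hgrad_cont : ∀ i, Continuous (fun y => gradient (g i) y) := by
    intro i
    have h1 : Continuous (fun y => fderiv ℝ (g i) y) :=
      ((hg i).fderiv_right (m := 1) (by norm_num)).continuous
    exact (InnerProductSpace.toDual ℝ (Euc n)).symm.continuous.comp h1
  have hh_cont : ∀ i, Continuous (h i) := fun i => (hh i).locallyLipschitz.continuous
  have hgdiff : ∀ i, Differentiable ℝ (g i) := fun i => (hg i).differentiable (by norm_num)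
  -- theta as a finite sup'
  have theta_eq : ∀ (y d' : Euc n), theta g h B y d' = Finset.univ.sup' hne
      (fun i => ⟪gradient (g i) y, d'⟫ + (1 / 2) * ⟪d', B i y d'⟫ + h i (y + d') - h i y) := by
    intro y d'
    unfold theta
    exact (Finset.sup'_univ_eq_ciSup _).symm
  have term_le_theta : ∀ (i : Fin m) (y d' : Euc n),
      ⟪gradient (g i) y, d'⟫ + (1 / 2) * ⟪d', B i y d'⟫ + h i (y + d') - h i y
        ≤ theta g h B y d' := by
    intro i y d'
    rw [theta_eq]
    exact Finset.le_sup'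
      (fun i => ⟪gradient (g i) y, d'⟫ + (1 / 2) * ⟪d', B i y d'⟫ + h i (y + d') - h i y)
      (Finset.mem_univ i)
  have theta_le : ∀ (y d' : Euc n) (c : ℝ),
      (∀ i : Fin m, ⟪gradient (g i) y, d'⟫ + (1 / 2) * ⟪d', B i y d'⟫ + h i (y + d') - h i y ≤ c)
        → theta g h B y d' ≤ c := by
    intro y d' c hc
    rw [theta_eq]
    exact Finset.sup'_le _ _ (fun i _ => hc i)
  have theta_zero : ∀ y : Euc n, theta g h B y 0 = 0 := by
    intro y
    rw [theta_eq]
    have : (fun i : Fin m => ⟪gradient (g i) y, (0:Euc n)⟫ + (1 / 2) * ⟪(0:Euc n), B i y 0⟫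
        + h i (y + 0) - h i y) = fun _ => (0:ℝ) := by
      funext i; simp
    rw [this, Finset.sup'_const]
  have htheta_cont : ∀ d' : Euc n, Continuous (fun y => theta g h B y d') := by
    intro d'
    have heq : (fun y => theta g h B y d') = fun y => Finset.univ.sup' hne
        (fun i => ⟪gradient (g i) y, d'⟫ + (1 / 2) * ⟪d', B i y d'⟫ + h i (y + d') - h i y) :=
      funext fun y => theta_eq y d'
    rw [heq]
    apply aux_cont_sup'
    intro i
    have c1 : Continuous fun y => ⟪gradient (g i) y, d'⟫ := (hgrad_cont i).inner continuous_const
    have c2 : Continuous fun y => ⟪d', B i y d'⟫ :=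
      continuous_const.inner ((hBcont i).clm_apply continuous_const)
    have c3 : Continuous fun y => h i (y + d') := (hh_cont i).comp (continuous_id.add continuous_const)
    exact ((c1.add (continuous_const.mul c2)).add c3).sub (hh_cont i)
  -- basic properties of the steps
  have hlam_pos : ∀ k, 0 < lam k := by
    intro k; obtain ⟨j, hj⟩ := hlam_form k; rw [hj]; positivity
  have hθd : ∀ k, theta g h B (x k) (dω (x k)) ≤ -((ω/2) * ‖dω (x k)‖^2) := by
    intro k
    have := hmin (x k) 0
    rw [phi, phi, theta_zero] at this
    simp only [norm_zero] at this
    nlinarith [this]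
  have hθneg : ∀ k, theta g h B (x k) (dω (x k)) < 0 := by
    intro k
    have h1 := hθd k
    have h2 : 0 < ‖dω (x k)‖ := norm_pos_iff.mpr (hd k)
    nlinarith [mul_pos (div_pos hω two_pos) (pow_pos h2 2)]
  -- λ_k θ_k → 0
  have key : Tendsto (fun k => lam k * -theta g h B (x k) (dω (x k))) atTop (𝓝 0) := by
    set F : ℕ → ℝ := fun k => g i0 (x k) + h i0 (x k) with hF
    have hstep' : ∀ k, F (k+1) ≤ F k + lam k * τ * theta g h B (x k) (dω (x k)) := by
      intro k
      rw [hF]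
      simp only [hstep k]
      exact harm k i0
    have hanti : Antitone F := by
      apply antitone_nat_of_succ_le
      intro k
      have h1 := hstep' k
      have h2 : lam k * τ * theta g h B (x k) (dω (x k)) ≤ 0 := by
        have h3 := hθneg k
        have h4 := mul_pos (hlam_pos k) hτ0
        nlinarith [mul_pos h4 (neg_pos.mpr h3)]
      linarith
    obtain ⟨C, hC⟩ := hbdd i0
    have hFbdd : BddBelow (Set.range F) := ⟨C, by rintro y ⟨k, rfl⟩; exact hC k⟩
    have hFtend : Tendsto F atTop (𝓝 (⨅ k, F k)) := tendsto_atTop_ciInf hanti hFbdd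
    have hdiff0 : Tendsto (fun k => F k - F (k+1)) atTop (𝓝 0) := by
      have := hFtend.sub (hFtend.comp (tendsto_add_atTop_nat 1))
      simpa using this
    have key0 : Tendsto (fun k => lam k * τ * -theta g h B (x k) (dω (x k))) atTop (𝓝 0) := by
      apply tendsto_of_tendsto_of_tendsto_of_le_of_le tendsto_const_nhds hdiff0
      · intro k
        dsimp only
        have h3 := hθneg k
        have h4 := mul_pos (hlam_pos k) hτ0
        nlinarith [mul_pos h4 (neg_pos.mpr h3)]
      · intro k
        dsimp only
        have h5 := hstep' k
        nlinarith [h5]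
    have hmul := key0.const_mul (1/τ)
    simp only [mul_zero] at hmul
    convert hmul using 2 with k
    field_simp
  -- main work
  intro a ha
  obtain ⟨ψ, hψ, hψt⟩ := TopologicalSpace.FirstCountableTopology.tendsto_subseq ha
  -- Main claim: φ_{ω,a}(d') ≥ 0 for all d'
  have hstar : ∀ d' : Euc n, 0 ≤ phi g h B ω a d' := by
    by_contra hcon
    push_neg at hcon
    obtain ⟨d0, hd0⟩ := hcon
    set ε : ℝ := -(phi g h B ω a d0) with hεdef
    have hε0 : 0 < ε := by rw [hεdef]; linarith
    have hΦcont : Continuous (fun y => phi g h B ω y d0) := by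
      unfold phi
      exact (htheta_cont d0).add continuous_const
    have hΦ : Tendsto (fun j => phi g h B ω (x (ψ j)) d0) atTop (𝓝 (phi g h B ω a d0)) :=
      (hΦcont.tendsto a).comp hψt
    have hev1 : ∀ᶠ j in atTop, phi g h B ω (x (ψ j)) d0 < -ε/2 :=
      hΦ.eventually_lt_const (by rw [hεdef]; linarith)
    have hθsmall : ∀ᶠ j in atTop, theta g h B (x (ψ j)) (dω (x (ψ j))) ≤ -ε/2 := by
      filter_upwards [hev1] with j hj
      have h1 := hmin (x (ψ j)) d0
      have h2 : theta g h B (x (ψ j)) (dω (x (ψ j))) ≤ phi g h B ω (x (ψ j)) (dω (x (ψ j))) := by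
        rw [phi]
        nlinarith [sq_nonneg ‖dω (x (ψ j))‖, norm_nonneg (dω (x (ψ j)))]
      linarith
    have hlamto0 : Tendsto (fun j => lam (ψ j)) atTop (𝓝 0) := by
      have hkey' : Tendsto (fun j => lam (ψ j) * -theta g h B (x (ψ j)) (dω (x (ψ j))))
          atTop (𝓝 0) := key.comp hψ.tendsto_atTop
      have hub := hkey'.const_mul (2/ε)
      simp only [mul_zero] at hub
      apply tendsto_of_tendsto_of_tendsto_of_le_of_le' tendsto_const_nhds hub
      · exact Eventually.of_forall fun j => (hlam_pos (ψ j)).le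
      · filter_upwards [hθsmall] with j hj
        have h1 := hlam_pos (ψ j)
        have h2 : ε/2 ≤ -theta g h B (x (ψ j)) (dω (x (ψ j))) := by linarith
        have h3 : lam (ψ j) * (ε/2) ≤ lam (ψ j) * -theta g h B (x (ψ j)) (dω (x (ψ j))) :=
          mul_le_mul_of_nonneg_left h2 h1.le
        calc lam (ψ j) = (2/ε) * (lam (ψ j) * (ε/2)) := by field_simp
          _ ≤ (2/ε) * (lam (ψ j) * -theta g h B (x (ψ j)) (dω (x (ψ j)))) := by
              apply mul_le_mul_of_nonneg_left h3; positivity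
    have hxball : ∀ᶠ j in atTop, x (ψ j) ∈ Metric.closedBall a 1 :=
      hψt.eventually_mem (Metric.closedBall_mem_nhds a one_pos)
    -- bound on ‖d^k‖
    obtain ⟨C1, hC1⟩ := (isCompact_closedBall a 1).exists_bound_of_continuousOn
      ((hgrad_cont i0).continuousOn)
    obtain ⟨M, hM⟩ := ((isCompact_closedBall a 1).prod
        (isCompact_closedBall (0:Euc n) 1)).exists_bound_of_continuousOn
      (Continuous.continuousOn
        (((hh_cont i0).comp (continuous_fst.add continuous_snd)).sub
          ((hh_cont i0).comp continuous_fst)))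
    set Md : ℝ := max 1 (2*(C1+M)/ω) with hMddef
    have hMd1 : (1:ℝ) ≤ Md := le_max_left _ _
    have hMd0 : (0:ℝ) ≤ Md := by linarith
    have hdbound : ∀ k, x k ∈ Metric.closedBall a 1 → ‖dω (x k)‖ ≤ Md := by
      intro k hk
      set Dk : ℝ := ‖dω (x k)‖ with hDk
      by_cases hD1 : Dk ≤ 1
      · exact le_trans hD1 hMd1
      push_neg at hD1
      have hDpos : (0:ℝ) < Dk := by linarith
      have hgb : -(C1*Dk) ≤ ⟪gradient (g i0) (x k), dω (x k)⟫ := by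
        have h1 := abs_real_inner_le_norm (gradient (g i0) (x k)) (dω (x k))
        have h2 := hC1 (x k) hk
        have h3 := abs_le.mp h1
        nlinarith [norm_nonneg (dω (x k))]
      have hBb : 0 ≤ ⟪dω (x k), B i0 (x k) (dω (x k))⟫ := (hBpos i0 (x k) _ (hd k)).le
      have hhb : -(M*Dk) ≤ h i0 (x k + dω (x k)) - h i0 (x k) := by
        set u : Euc n := Dk⁻¹ • dω (x k) with hu
        have hunorm : ‖u‖ = 1 := by
          rw [hu, norm_smul, norm_inv, Real.norm_eq_abs, abs_of_pos hDpos, ← hDk]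
          field_simp
        have humem : ((x k, u) : Euc n × Euc n) ∈
            (Metric.closedBall a 1) ×ˢ (Metric.closedBall (0:Euc n) 1) := by
          constructor
          · exact hk
          · simp [Metric.mem_closedBall, dist_zero_right, hunorm]
        have hMu := hM _ humem
        have hMu' : -M ≤ h i0 (x k + u) - h i0 (x k) := by
          have h7 : |h i0 (x k + u) - h i0 (x k)| ≤ M := by
            simpa [Function.comp] using hMu
          linarith [(abs_le.mp h7).1]
        have ha1 : (0:ℝ) ≤ 1 - Dk⁻¹ := by
          have : Dk⁻¹ ≤ 1 := by
            rw [inv_le_one_iff₀]; right; linarith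
          linarith
        have ha2 : (0:ℝ) ≤ Dk⁻¹ := by positivity
        have ha3 : (1 - Dk⁻¹) + Dk⁻¹ = 1 := by ring
        have hconv : h i0 ((1 - Dk⁻¹) • x k + Dk⁻¹ • (x k + dω (x k)))
            ≤ (1 - Dk⁻¹) * h i0 (x k) + Dk⁻¹ * h i0 (x k + dω (x k)) :=
          (hh i0).2 (Set.mem_univ _) (Set.mem_univ _) ha1 ha2 ha3
        have hptx : (1 - Dk⁻¹) • x k + Dk⁻¹ • (x k + dω (x k)) = x k + u := by
          rw [hu]; module
        rw [hptx] at hconv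
        -- hconv : h (x k + u) ≤ (1 - Dk⁻¹) * h (x k) + Dk⁻¹ * h (x k + d)
        have h5 : h i0 (x k + u) - h i0 (x k) ≤ Dk⁻¹ * (h i0 (x k + dω (x k)) - h i0 (x k)) := by
          nlinarith [hconv]
        have h6 : Dk * (h i0 (x k + u) - h i0 (x k)) ≤ h i0 (x k + dω (x k)) - h i0 (x k) := by
          have := mul_le_mul_of_nonneg_left h5 hDpos.le
          calc Dk * (h i0 (x k + u) - h i0 (x k))
              ≤ Dk * (Dk⁻¹ * (h i0 (x k + dω (x k)) - h i0 (x k))) := this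
            _ = h i0 (x k + dω (x k)) - h i0 (x k) := by field_simp
        nlinarith [mul_le_mul_of_nonneg_left hMu' hDpos.le]
      have hterm := term_le_theta i0 (x k) (dω (x k))
      have hθk := hθd k
      have hcomb : -((ω/2) * Dk^2) ≥ -(C1*Dk) + -(M*Dk) := by
        have := le_trans hterm hθk
        rw [← hDk] at this
        nlinarith
      have hDle : Dk ≤ 2*(C1+M)/ω := by
        rw [le_div_iff₀ hω]
        nlinarith [hcomb, hDpos, hD1]
      calc Dk ≤ 2*(C1+M)/ω := hDle
        _ ≤ Md := le_max_right _ _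
    have hdb' : ∀ᶠ j in atTop, ‖dω (x (ψ j))‖ ≤ Md := by
      filter_upwards [hxball] with j hj
      exact hdbound _ hj
    -- Taylor constants on K
    set K : Set (Euc n) := Metric.closedBall a (2 + Md) with hK
    have hKc : IsCompact K := isCompact_closedBall a _
    have hKconv : Convex ℝ K := convex_closedBall a _
    have hLex : ∀ i : Fin m, ∃ L : ℝ, 0 ≤ L ∧ ∀ u ∈ K, ∀ v ∈ K,
        g i v ≤ g i u + ⟪gradient (g i) u, v - u⟫ + L * ‖v - u‖ ^ 2 :=
      fun i => aux_taylor_bound (g i) (hg i) K hKc hKconv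
    choose L hL0 hLb using hLex
    set Lm : ℝ := Finset.univ.sup' hne L with hLm
    have hLle : ∀ i, L i ≤ Lm := fun i => Finset.le_sup' L (Finset.mem_univ i)
    have hLm0 : 0 ≤ Lm := le_trans (hL0 i0) (hLle i0)
    -- pick a good index
    set δ : ℝ := min ζ ((ζ * ((1-τ)*(ε/2)))/(Lm*Md^2 + 1)) with hδdef
    have hpos1' : (0:ℝ) < Lm*Md^2 + 1 := by nlinarith [mul_nonneg hLm0 (sq_nonneg Md)]
    have hδ0 : 0 < δ := by
      apply lt_min hζ0
      have hnum : 0 < ζ * ((1-τ)*(ε/2)) :=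
        mul_pos hζ0 (mul_pos (by linarith) (by linarith))
      exact div_pos hnum hpos1'
    have hev4 : ∀ᶠ j in atTop, lam (ψ j) < δ := hlamto0.eventually_lt_const hδ0
    obtain ⟨j, hj'⟩ := (((hxball.and hθsmall).and hdb').and hev4).exists
    obtain ⟨⟨⟨hj1, hj2⟩, hj3⟩, hj4⟩ := hj'
    -- notation for the chosen index
    set k := ψ j with hkdef
    set dk := dω (x k) with hdk
    set θk := theta g h B (x k) dk with hθk
    obtain ⟨jk, hjk⟩ := hlam_form k
    have hjk1 : jk ≠ 0 := by
      intro h0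
      rw [h0, pow_zero] at hjk
      have : δ ≤ ζ := min_le_left _ _
      rw [hjk] at hj4
      linarith
    set t : ℝ := ζ^(jk - 1) with htdef
    have hts : ζ * t = lam k := by
      rw [htdef, hjk, ← pow_succ']
      congr 1
      omega
    have htpos : 0 < t := by rw [htdef]; positivity
    have htle1 : t ≤ 1 := by
      rw [htdef]
      exact pow_le_one₀ hζ0.le hζ1.le
    have hlt : lam k < ζ^(jk - 1) := by
      rw [hjk]
      exact pow_lt_pow_right_of_lt_one₀ hζ0 hζ1 (by omega)
    obtain ⟨i, hi⟩ := hlam_max k (jk - 1) hlt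
    rw [← htdef] at hi
    -- memberships in K
    have hMd2 : (1:ℝ) ≤ 2 + Md := by linarith
    have hxkK : x k ∈ K := by
      rw [hK]
      exact Metric.closedBall_subset_closedBall hMd2 hj1
    have hdkMd : ‖dk‖ ≤ Md := hj3
    have hxdK : x k + dk ∈ K := by
      rw [hK, Metric.mem_closedBall, dist_eq_norm]
      have : x k + dk - a = (x k - a) + dk := by abel
      rw [this]
      have h1 : ‖x k - a‖ ≤ 1 := by
        rw [← dist_eq_norm]; exact hj1
      calc ‖(x k - a) + dk‖ ≤ ‖x k - a‖ + ‖dk‖ := norm_add_le _ _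
        _ ≤ 1 + Md := add_le_add h1 hdkMd
        _ ≤ 2 + Md := by linarith
    have hxtdK : x k + t • dk ∈ K := by
      rw [hK, Metric.mem_closedBall, dist_eq_norm]
      have : x k + t • dk - a = (x k - a) + t • dk := by abel
      rw [this]
      have h1 : ‖x k - a‖ ≤ 1 := by
        rw [← dist_eq_norm]; exact hj1
      have h2 : ‖t • dk‖ ≤ Md := by
        rw [norm_smul, Real.norm_eq_abs, abs_of_pos htpos]
        calc t * ‖dk‖ ≤ 1 * Md := by
              apply mul_le_mul htle1 hdkMd (norm_nonneg _) (by norm_num)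
          _ = Md := one_mul Md
      calc ‖(x k - a) + t • dk‖ ≤ ‖x k - a‖ + ‖t • dk‖ := norm_add_le _ _
        _ ≤ 1 + Md := add_le_add h1 h2
        _ ≤ 2 + Md := by linarith
    -- Taylor bound for g i
    have hgb := hLb i (x k) hxkK (x k + t • dk) hxtdK
    have hsimp1 : x k + t • dk - x k = t • dk := by abel
    rw [hsimp1, real_inner_smul_right, norm_smul, Real.norm_eq_abs, abs_of_pos htpos] at hgb
    -- hgb : g i (x k + t•dk) ≤ g i (x k) + t * ⟪∇g_i (x k), dk⟫ + L i * (t*‖dk‖)^2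
    -- convexity bound for h i
    have ht1 : (0:ℝ) ≤ 1 - t := by linarith
    have hconv2 : h i ((1 - t) • x k + t • (x k + dk))
        ≤ (1 - t) * h i (x k) + t * h i (x k + dk) :=
      (hh i).2 (Set.mem_univ _) (Set.mem_univ _) ht1 htpos.le (by ring)
    have hptx2 : (1 - t) • x k + t • (x k + dk) = x k + t • dk := by module
    rw [hptx2] at hconv2
    -- term bound
    have hterm2 : ⟪gradient (g i) (x k), dk⟫ + (h i (x k + dk) - h i (x k)) ≤ θk := by
      have hB2 : 0 ≤ (1/2) * ⟪dk, B i (x k) dk⟫ := by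
        have := (hBpos i (x k) dk (by rw [hdk]; exact hd k)).le
        linarith
      have := term_le_theta i (x k) dk
      rw [← hθk] at this
      linarith
    -- the Armijo failure inequality
    have hLi := hLle i
    have hLi0 := hL0 i
    have hdknn : (0:ℝ) ≤ ‖dk‖ := norm_nonneg _
    have hMd2' : ‖dk‖^2 ≤ Md^2 := by nlinarith
    -- combine: t*τ*θk < t*θk + Lm*t^2*Md^2
    have hchain : t * τ * θk < t * θk + Lm * t^2 * Md^2 := by
      have h1 : g i (x k + t • dk) + h i (x k + t • dk)
          ≤ g i (x k) + h i (x k) + t * (⟪gradient (g i) (x k), dk⟫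
            + (h i (x k + dk) - h i (x k))) + L i * (t * ‖dk‖)^2 := by
        nlinarith [hgb, hconv2]
      have h2 : L i * (t * ‖dk‖)^2 ≤ Lm * t^2 * Md^2 := by
        have e1 : (t * ‖dk‖)^2 = t^2 * ‖dk‖^2 := by ring
        rw [e1]
        have e2 : t^2 * ‖dk‖^2 ≤ t^2 * Md^2 :=
          mul_le_mul_of_nonneg_left hMd2' (sq_nonneg t)
        nlinarith [sq_nonneg t, mul_nonneg (sq_nonneg t) (mul_nonneg hdknn hdknn)]
      have h3 : t * (⟪gradient (g i) (x k), dk⟫ + (h i (x k + dk) - h i (x k)))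
          ≤ t * θk := mul_le_mul_of_nonneg_left hterm2 htpos.le
      have h4 := hi
      -- hi : F_i(x k) + t*τ*θk < F_i(x k + t•dk)
      rw [← hθk, ← hdk] at h4
      linarith
    -- divide by t and contradict
    have hθsm : θk ≤ -ε/2 := by rw [hθk, hdk]; exact hj2
    have hfrac : (1 - τ) * (ε/2) ≤ (1 - τ) * (-θk) := by
      apply mul_le_mul_of_nonneg_left _ (by linarith)
      linarith
    have hdiv : (1 - τ) * (-θk) < Lm * t * Md^2 := by
      have h5 : t * ((1 - τ) * (-θk)) < t * (Lm * t * Md^2) := by ring_nf; ring_nf at hchain; nlinarith [hchain]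
      exact lt_of_mul_lt_mul_left (by linarith [h5]) htpos.le
    -- final numeric contradiction
    have htsmall : t < ((1-τ)*(ε/2))/(Lm*Md^2 + 1) := by
      have h6 : lam k < (ζ * ((1-τ)*(ε/2)))/(Lm*Md^2 + 1) :=
        lt_of_lt_of_le hj4 (min_le_right _ _)
      have h7 : ζ * t < ζ * (((1-τ)*(ε/2))/(Lm*Md^2 + 1)) := by
        rw [hts]
        calc lam k < (ζ * ((1-τ)*(ε/2)))/(Lm*Md^2 + 1) := h6
          _ = ζ * (((1-τ)*(ε/2))/(Lm*Md^2 + 1)) := by ring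
      exact lt_of_mul_lt_mul_left h7 hζ0.le
    have hpos1 : (0:ℝ) < Lm*Md^2 + 1 := by positivity
    have h8 : Lm * t * Md^2 < (1-τ)*(ε/2) := by
      have h9 : Lm * Md^2 * t ≤ (Lm*Md^2 + 1) * t := by nlinarith
      have h10 : (Lm*Md^2 + 1) * t < (1-τ)*(ε/2) := by
        rw [← lt_div_iff₀' hpos1]
        exact htsmall
      nlinarith
    linarith
  -- endgame: derive Pareto stationarity from hstar
  intro d
  by_cases hd0 : d = 0
  · refine ⟨i0, 0, ?_, le_refl 0⟩
    unfold HasDirDeriv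
    subst hd0
    have : (fun α : ℝ => ((g i0 (a + α • (0:Euc n)) + h i0 (a + α • (0:Euc n)))
        - (g i0 a + h i0 a)) / α) = fun _ => 0 := by
      funext α; simp
    rw [this]
    exact tendsto_const_nhds
  · -- directional derivatives
    choose q hqt hqle using fun i => aux_convex_dirderiv (h i) (hh i) a d
    set D : Fin m → ℝ := fun i => ⟪gradient (g i) a, d⟫ + q i with hD
    have hDD : ∀ i, HasDirDeriv (fun y => g i y + h i y) a d (D i) := by
      intro i
      unfold HasDirDeriv
      have h1 : HasDerivAt (fun t : ℝ => a + t • d) d 0 := by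
        simpa using ((hasDerivAt_id (0:ℝ)).smul_const d).const_add a
      have h2 : HasDerivAt (fun t : ℝ => g i (a + t • d)) (fderiv ℝ (g i) a d) 0 := by
        have hfd : HasFDerivAt (g i) (fderiv ℝ (g i) a) ((fun t : ℝ => a + t • d) 0) := by
          simpa using ((hgdiff i) a).hasFDerivAt
        exact hfd.comp_hasDerivAt 0 h1
      rw [hasDerivAt_iff_tendsto_slope] at h2
      have h3 : Tendsto (fun α : ℝ => (g i (a + α • d) - g i a) / α)
          (nhdsWithin 0 (Set.Ioi 0)) (𝓝 (fderiv ℝ (g i) a d)) := by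
        have h4 := h2.mono_left (nhdsWithin_mono (0:ℝ) (fun t ht => Set.mem_compl_singleton_iff.mpr (ne_of_gt ht)))
        apply h4.congr
        intro α
        simp [slope_def_field]
      have h5 : fderiv ℝ (g i) a d = ⟪gradient (g i) a, d⟫ := by
        simp [gradient, InnerProductSpace.toDual_symm_apply]
      rw [h5] at h3
      have h6 := h3.add (hqt i)
      apply h6.congr
      intro α
      rw [← add_div]
      ring_nf
    set CB : ℝ := Finset.univ.sup' hne (fun i => ⟪d, B i a d⟫) with hCB
    have hCB0 : 0 ≤ CB :=
      le_trans (hBpos i0 a d hd0).le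
        (Finset.le_sup' (fun i => ⟪d, B i a d⟫) (Finset.mem_univ i0))
    set X : ℝ → ℝ := fun t => Finset.univ.sup' hne
      (fun i => ⟪gradient (g i) a, d⟫ + (h i (a + t • d) - h i a)/t) with hX
    have hXlow : ∀ t : ℝ, 0 < t → -(t/2)*(CB + ω*‖d‖^2) ≤ X t := by
      intro t ht
      have h0 := hstar (t • d)
      rw [phi] at h0
      have h1 : theta g h B a (t • d) ≤ t * X t + (t^2/2)*CB := by
        apply theta_le
        intro i
        have e1 : ⟪gradient (g i) a, t • d⟫ = t * ⟪gradient (g i) a, d⟫ :=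
          real_inner_smul_right _ _ _
        have e2 : ⟪t • d, B i a (t • d)⟫ = t^2 * ⟪d, B i a d⟫ := by
          rw [map_smul, real_inner_smul_left, real_inner_smul_right]
          ring
        have e3 : h i (a + t • d) - h i a = t * ((h i (a + t • d) - h i a)/t) := by
          field_simp
        have le1 : ⟪gradient (g i) a, d⟫ + (h i (a + t • d) - h i a)/t ≤ X t :=
          Finset.le_sup' (fun i => ⟪gradient (g i) a, d⟫ + (h i (a + t • d) - h i a)/t)
            (Finset.mem_univ i)
        have le2 : ⟪d, B i a d⟫ ≤ CB :=
          Finset.le_sup' (fun i => ⟪d, B i a d⟫) (Finset.mem_univ i)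
        rw [e1, e2]
        nlinarith [le1, le2, sq_nonneg t]
      have h2 : ‖t • d‖^2 = t^2 * ‖d‖^2 := by
        rw [norm_smul, Real.norm_eq_abs, mul_pow, sq_abs]
      rw [h2] at h0
      have h4 : t * (-(t/2)*(CB + ω*‖d‖^2)) ≤ t * (X t) := by nlinarith [h0, h1]
      exact (mul_le_mul_iff_right₀ ht).mp h4
    have hXhigh : ∀ t : ℝ, 0 < t → X t ≤ Finset.univ.sup' hne D
        + ∑ i : Fin m, ((h i (a + t • d) - h i a)/t - q i) := by
      intro t ht
      apply Finset.sup'_le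
      intro i _
      have h1 : ⟪gradient (g i) a, d⟫ + (h i (a + t • d) - h i a)/t
          = D i + ((h i (a + t • d) - h i a)/t - q i) := by rw [hD]; ring
      rw [h1]
      have h2 : D i ≤ Finset.univ.sup' hne D := Finset.le_sup' D (Finset.mem_univ i)
      have h3 : (h i (a + t • d) - h i a)/t - q i
          ≤ ∑ i' : Fin m, ((h i' (a + t • d) - h i' a)/t - q i') := by
        apply Finset.single_le_sum (f := fun i' => (h i' (a + t • d) - h i' a)/t - q i')
        · intro i' _
          have := hqle i' t ht
          linarith
        · exact Finset.mem_univ i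
      exact add_le_add h2 h3
    have htendsum : Tendsto (fun t : ℝ => Finset.univ.sup' hne D
        + ∑ i : Fin m, ((h i (a + t • d) - h i a)/t - q i))
        (nhdsWithin 0 (Set.Ioi 0)) (𝓝 (Finset.univ.sup' hne D)) := by
      have h1 : Tendsto (fun t : ℝ => ∑ i : Fin m, ((h i (a + t • d) - h i a)/t - q i))
          (nhdsWithin 0 (Set.Ioi 0)) (𝓝 0) := by
        have h2 : Tendsto (fun t : ℝ => ∑ i : Fin m, ((h i (a + t • d) - h i a)/t - q i))
            (nhdsWithin 0 (Set.Ioi 0)) (𝓝 (∑ i : Fin m, (q i - q i))) := by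
          apply tendsto_finset_sum
          intro i _
          exact (hqt i).sub tendsto_const_nhds
        simpa using h2
      have := (tendsto_const_nhds (α := ℝ) (x := Finset.univ.sup' hne D)
        (f := nhdsWithin (0:ℝ) (Set.Ioi 0))).add h1
      simpa using this
    have htendlow : Tendsto (fun t : ℝ => -(t/2)*(CB + ω*‖d‖^2))
        (nhdsWithin 0 (Set.Ioi 0)) (𝓝 0) := by
      have h1 : Tendsto (fun t : ℝ => -(t/2)*(CB + ω*‖d‖^2)) (𝓝 0)
          (𝓝 (-(0/2)*(CB + ω*‖d‖^2))) := by
        apply Tendsto.mul _ tendsto_const_nhds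
        exact (tendsto_id.div_const 2).neg
      simp only [zero_div, neg_zero, zero_mul] at h1
      exact h1.mono_left nhdsWithin_le_nhds
    have hsup_nonneg : 0 ≤ Finset.univ.sup' hne D := by
      have hev : ∀ᶠ t in nhdsWithin (0:ℝ) (Set.Ioi 0),
          -(t/2)*(CB + ω*‖d‖^2) ≤ Finset.univ.sup' hne D
            + ∑ i : Fin m, ((h i (a + t • d) - h i a)/t - q i) := by
        filter_upwards [self_mem_nhdsWithin] with t ht
        exact le_trans (hXlow t ht) (hXhigh t ht)
      exact le_of_tendsto_of_tendsto htendlow htendsum hev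
    obtain ⟨i, _, hieq⟩ := Finset.exists_mem_eq_sup' hne D
    exact ⟨i, D i, hDD i, by rw [hieq] at hsup_nonneg; exact hsup_nonneg⟩
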